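/- arXiv:2207.07892 — 2 statements merged into one kernel-verified Lean document; each statement's English description precedes it below -/
import Mathlib

section
/- Let Q be an abstract key polynomial for w with w_Q < w. Then every F ∈ Φ(w_Q, w) is an abstract key polynomial for w, and δ(Q) < δ(F). -/
namespace MLV

open Polynomial

/-- An additive valuation on a commutative ring `R` with values in `Γ ∪ {∞}`
(written additively, with the `min` convention), thought of as the restriction
to `R` of a valuation on its fraction field. -/
structure ValOn (R : Type*) [CommRing R] (Γ : Type*) [AddCommGroup Γ] [LinearOrder Γ] [IsOrderedAddMonoid Γ] where
  toFun : R → WithTop Γ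
  map_zero' : toFun 0 = ⊤
  ne_top' : ∀ f : R, f ≠ 0 → toFun f ≠ ⊤
  map_mul' : ∀ f g : R, toFun (f * g) = toFun f + toFun g
  add_min' : ∀ f g : R, min (toFun f) (toFun g) ≤ toFun (f + g)

variable {K : Type*} [Field K] {Γ : Type*} [AddCommGroup Γ] [LinearOrder Γ] [IsOrderedAddMonoid Γ]

/-- `w` (a valuation on `K(X)`, restricted to `K[X]`) extends the valuation `v` of `K`. -/
def Extends (w : ValOn (Polynomial K) Γ) (v : ValOn K Γ) : Prop :=
  ∀ c : K, w.toFun (C c) = v.toFun c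

/-- `wbar` (a valuation on `K̄(X)`) is a common extension of `w` and of `vbar`. -/
def IsCommonExt {L : Type*} [Field L] [Algebra K L]
    (wbar : ValOn (Polynomial L) Γ) (w : ValOn (Polynomial K) Γ) (vbar : ValOn L Γ) : Prop :=
  (∀ f : Polynomial K, wbar.toFun (f.map (algebraMap K L)) = w.toFun f) ∧
  (∀ c : L, wbar.toFun (C c) = vbar.toFun c)

/-- `δ(f) = max { w̄(X - α) : α ∈ K̄, f(α) = 0 }` (as an element of `WithBot (WithTop Γ)`,
the value `⊥` corresponding to a polynomial without roots). -/
noncomputable def delta {L : Type*} [Field L] [Algebra K L]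
    (wbar : ValOn (Polynomial L) Γ) (f : Polynomial K) : WithBot (WithTop Γ) :=
  (((f.map (algebraMap K L)).roots).map
    fun α => ((wbar.toFun (X - C α) : WithTop Γ) : WithBot (WithTop Γ))).sup

/-- `Q` is an abstract key polynomial for `w` (with respect to the common extension `wbar`
computing `δ`): `Q` is monic and `δ(f) < δ(Q)` for every nonzero `f` with `deg f < deg Q`. -/
def IsABKP {L : Type*} [Field L] [Algebra K L]
    (wbar : ValOn (Polynomial L) Γ) (Q : Polynomial K) : Prop :=
  Q.Monic ∧ ∀ f : Polynomial K, f ≠ 0 → f.degree < Q.degree → delta wbar f < delta wbar Q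

/-- The `Q`-truncation `w_Q` of `w`: on the `Q`-expansion `f = ∑ fᵢ Qⁱ` it equals
`min_i w(fᵢ Qⁱ)`. -/
noncomputable def truncVal (w : ValOn (Polynomial K) Γ) (Q f : Polynomial K) : WithTop Γ :=
  (Finset.range (f.natDegree + 1)).inf fun i => w.toFun ((f /ₘ Q ^ i) %ₘ Q * Q ^ i)

/-- `f ∼_u g` : `u(f - g) > u f = u g`. -/
def EquivMod (u : Polynomial K → WithTop Γ) (f g : Polynomial K) : Prop :=
  u f < u (f - g) ∧ u f = u g

/-- `f ∣_u g` : `g ∼_u f h` for some `h`. -/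
def DvdMod (u : Polynomial K → WithTop Γ) (f g : Polynomial K) : Prop :=
  ∃ h : Polynomial K, EquivMod u g (f * h)

/-- A key polynomial for `u`: monic, `u`-irreducible and `u`-minimal. -/
def IsKeyPol (u : Polynomial K → WithTop Γ) (φ : Polynomial K) : Prop :=
  φ.Monic ∧
  (∀ h q : Polynomial K, DvdMod u φ (h * q) → DvdMod u φ h ∨ DvdMod u φ q) ∧
  (∀ h : Polynomial K, h ≠ 0 → DvdMod u φ h → φ.degree ≤ h.degree)

/-- A key polynomial for `u` of minimal degree (i.e. of degree `deg(u)`). -/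
def IsMinKeyPol (u : Polynomial K → WithTop Γ) (φ : Polynomial K) : Prop :=
  IsKeyPol u φ ∧ ∀ ψ : Polynomial K, IsKeyPol u ψ → φ.degree ≤ ψ.degree

/-- `u ≤ u'` pointwise on `K[X]`. -/
def FnLe (u u' : Polynomial K → WithTop Γ) : Prop :=
  ∀ f : Polynomial K, u f ≤ u' f

/-- `u < u'` : `u ≤ u'` and `u f < u' f` for some `f`. -/
def FnLt (u u' : Polynomial K → WithTop Γ) : Prop :=
  FnLe u u' ∧ ∃ f : Polynomial K, u f < u' f

/-- `g ∈ Φ(u, u')` : `g` is monic of minimal degree with `u g < u' g`. -/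
def InPhi (u u' : Polynomial K → WithTop Γ) (g : Polynomial K) : Prop :=
  g.Monic ∧ u g < u' g ∧
  ∀ h : Polynomial K, h.Monic → u h < u' h → g.degree ≤ h.degree

/-- The value at `f` of the augmented valuation `[u; φ, γ]`, computed via the
`φ`-expansion `f = ∑ fᵢ φⁱ` as `min_i (u fᵢ + i γ)`. -/
noncomputable def augVal (u : Polynomial K → WithTop Γ) (φ : Polynomial K) (γ : Γ)
    (f : Polynomial K) : WithTop Γ :=
  (Finset.range (f.natDegree + 1)).inf
    fun i => u ((f /ₘ φ ^ i) %ₘ φ) + i • ((γ : WithTop Γ))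

/-- `u' = [u; φ, γ]` is the ordinary augmentation of `u` at the key polynomial `φ`
with value `γ > u φ`. -/
def IsOrdAug (u : Polynomial K → WithTop Γ) (φ : Polynomial K) (γ : Γ)
    (u' : Polynomial K → WithTop Γ) : Prop :=
  IsKeyPol u φ ∧ u φ < (γ : WithTop Γ) ∧ ∀ f : Polynomial K, u' f = augVal u φ γ f

/-- A continuous family of augmentations `(ρ_i = [w'; χ_i, γ_i])_{i ∈ ι}` of `w'`. -/
structure ContFamily (w' : ValOn (Polynomial K) Γ) (ι : Type*) [LinearOrder ι] where
  chi : ι → Polynomial K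
  gam : ι → Γ
  rho : ι → ValOn (Polynomial K) Γ
  no_last : ∀ i : ι, ∃ j : ι, i < j
  gam_mono : StrictMono gam
  aug : ∀ i : ι, IsOrdAug w'.toFun (chi i) (gam i) (rho i).toFun
  deg_eq : ∀ i j : ι, (chi i).degree = (chi j).degree
  key_step : ∀ i j : ι, i < j → IsKeyPol (rho i).toFun (chi j)
  not_equiv : ∀ i j : ι, i < j → ¬ EquivMod (rho i).toFun (chi j) (chi i)
  step : ∀ i j : ι, i < j → IsOrdAug (rho i).toFun (chi j) (gam j) (rho j).toFun

/-- `f` is `W`-stable with stable value `c`. -/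
def StableAt {w' : ValOn (Polynomial K) Γ} {ι : Type*} [LinearOrder ι]
    (F : ContFamily w' ι) (f : Polynomial K) (c : WithTop Γ) : Prop :=
  ∃ i0 : ι, ∀ i : ι, i0 ≤ i → (F.rho i).toFun f = c

/-- `f` is `W`-stable. -/
def IsStable {w' : ValOn (Polynomial K) Γ} {ι : Type*} [LinearOrder ι]
    (F : ContFamily w' ι) (f : Polynomial K) : Prop :=
  ∃ c : WithTop Γ, StableAt F f c

/-- The valuation `w` is the stable limit of the family `F`. -/
def IsStableLimit {w' : ValOn (Polynomial K) Γ} {ι : Type*} [LinearOrder ι]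
    (F : ContFamily w' ι) (w : ValOn (Polynomial K) Γ) : Prop :=
  ∀ f : Polynomial K, StableAt F f (w.toFun f)

/-- `Q` is a MacLane–Vaquié limit key polynomial for `F`: monic, `F`-unstable,
of minimal degree among unstable polynomials. -/
def IsLimitKP {w' : ValOn (Polynomial K) Γ} {ι : Type*} [LinearOrder ι]
    (F : ContFamily w' ι) (Q : Polynomial K) : Prop :=
  Q.Monic ∧ ¬ IsStable F Q ∧ ∀ g : Polynomial K, ¬ IsStable F g → Q.degree ≤ g.degree

/-- The continuous family `F` is essential: `deg(W) < m_∞ < ∞`. -/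
def IsEssential {w' : ValOn (Polynomial K) Γ} {ι : Type*} [LinearOrder ι]
    (F : ContFamily w' ι) : Prop :=
  (∃ f : Polynomial K, ¬ IsStable F f) ∧
  ∀ (i : ι) (f : Polynomial K), ¬ IsStable F f → (F.chi i).degree < f.degree

/-- `w = [F; Q, γ]` is the limit augmentation of the family `F` at the limit key
polynomial `Q` with value `γ`: on `Q`-expansions, `w f = min_i (ρ_W(fᵢ) + iγ)`, which
since the coefficients are stable is the eventual value of `[ρ_i; Q, γ]` on `f`. -/
def IsLimitAug {w' : ValOn (Polynomial K) Γ} {ι : Type*} [LinearOrder ι]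
    (F : ContFamily w' ι) (Q : Polynomial K) (γ : Γ)
    (w : ValOn (Polynomial K) Γ) : Prop :=
  IsLimitKP F Q ∧ (∀ i : ι, (F.rho i).toFun Q < (γ : WithTop Γ)) ∧
  ∀ f : Polynomial K, ∃ i0 : ι, ∀ i : ι, i0 ≤ i → w.toFun f = augVal (F.rho i).toFun Q γ f

/-- `w` is a depth-zero valuation `w_{α,δ}` over `v`. -/
def IsDepthZero (v : ValOn K Γ) (w : ValOn (Polynomial K) Γ) : Prop :=
  ∃ (α : K) (d : Γ), ∀ f : Polynomial K,
    w.toFun f = (Finset.range (f.natDegree + 1)).inf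
      fun i => v.toFun (((Polynomial.taylor α) f).coeff i) + i • ((d : WithTop Γ))

/-- An ordinary augmentation step of a MacLane–Vaquié chain:
`u' = [u; φ, γ]` with `deg(u) < deg Φ(u, u')`. -/
def OrdMLVStep (u u' : Polynomial K → WithTop Γ) (φ : Polynomial K) (γ : Γ) : Prop :=
  IsOrdAug u φ γ u' ∧
  ∀ ψ g : Polynomial K, IsMinKeyPol u ψ → InPhi u u' g → ψ.degree < g.degree

/-- A limit augmentation step of a MacLane–Vaquié chain, with the underlying essential
continuous family `F` made explicit: `w = [F; φ, γ]`, `deg(w') = deg Φ(w', w)` and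
`φprev ∉ Φ(w', w)`. -/
def LimMLVStepWith {w' : ValOn (Polynomial K) Γ} {ι : Type*} [LinearOrder ι]
    (F : ContFamily w' ι) (w : ValOn (Polynomial K) Γ)
    (φprev φ : Polynomial K) (γ : Γ) : Prop :=
  IsEssential F ∧ IsLimitAug F φ γ w ∧
  (∀ ψ g : Polynomial K, IsMinKeyPol w'.toFun ψ → InPhi w'.toFun w.toFun g →
    ψ.degree = g.degree) ∧
  ¬ InPhi w'.toFun w.toFun φprev

/-- A limit augmentation step of a MacLane–Vaquié chain (the underlying essential
continuous family being existentially quantified). -/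
def LimMLVStep (w' w : ValOn (Polynomial K) Γ) (φprev φ : Polynomial K) (γ : Γ) : Prop :=
  ∃ (ι : Type) (li : LinearOrder ι) (F : @ContFamily K _ Γ _ _ _ w' ι li),
    @LimMLVStepWith K _ Γ _ _ _ w' ι li F w φprev φ γ

/-- Membership in the index set `I`: `I = ℕ` if `o = none`, and `I = {0, …, N}`
if `o = some N`. -/
def InIdx (o : Option ℕ) (j : ℕ) : Prop :=
  ∀ N : ℕ, o = some N → j ≤ N

/-- An induced complete sequence `{Q_i}_{i ∈ Δ}` of abstract key polynomials for `w`: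
a complete sequence of ABKPs, organized in blocks `Δ_j = {j} ∪ ϑ_j` (for `j` in
`I = {0,…,N}` or `I = ℕ`), satisfying the properties of Remark 1.3.  Here `blk i`
is the block of an index `i ∈ Δ`, `main j ∈ Δ` is the distinguished first element
of the block `Δ_j`, and `ϑ_j = {i ∈ Δ | blk i = j, i ≠ main j}`. -/
structure ICS {L : Type*} [Field L] [Algebra K L]
    (wbar : ValOn (Polynomial L) Γ) (w : ValOn (Polynomial K) Γ)
    (Δ : Type*) [LinearOrder Δ] where
  Q : Δ → Polynomial K
  abkp : ∀ i : Δ, IsABKP wbar (Q i)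
  wf : WellFoundedLT Δ
  delta_mono : ∀ i i' : Δ, i < i' → delta wbar (Q i) < delta wbar (Q i')
  wval_mono : ∀ i i' : Δ, i < i' → w.toFun (Q i) < w.toFun (Q i')
  complete : ∀ f : Polynomial K, f ≠ 0 →
    ∃ i : Δ, (Q i).degree ≤ f.degree ∧ truncVal w (Q i) f = w.toFun f
  Ifin : Option ℕ
  blk : Δ → ℕ
  main : ℕ → Δ
  blk_mono : ∀ i i' : Δ, i ≤ i' → blk i ≤ blk i'
  blk_mem : ∀ i : Δ, InIdx Ifin (blk i)
  blk_main : ∀ j : ℕ, InIdx Ifin j → blk (main j) = j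
  main_min : ∀ (j : ℕ) (i : Δ), blk i = j → main j ≤ i
  theta_no_last : ∀ i : Δ, i ≠ main (blk i) →
    ∃ i' : Δ, blk i' = blk i ∧ i' ≠ main (blk i) ∧ i < i'
  deg_blk_eq : ∀ i i' : Δ, blk i = blk i' → (Q i).degree = (Q i').degree
  deg_blk_lt : ∀ i i' : Δ, blk i < blk i' → (Q i).degree < (Q i').degree
  degQ0 : (Q (main 0)).degree = 1


section StatementThirteen

open Polynomial Finset

set_option linter.unusedSectionVars false

variable {A : Type*} [CommRing A] [Nontrivial A] {Γ : Type*} [AddCommGroup Γ] [LinearOrder Γ] [IsOrderedAddMonoid Γ]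

namespace ValOn

variable (W : ValOn (Polynomial A) Γ)

lemma one_eq_zero : W.toFun 1 = 0 := by
  have h := W.map_mul' 1 1
  rw [mul_one] at h
  obtain ⟨a, ha⟩ := WithTop.ne_top_iff_exists.mp (W.ne_top' 1 one_ne_zero)
  rw [← ha] at h ⊢
  norm_cast at h ⊢
  exact (left_eq_add.mp h)

lemma neg_eq (f : Polynomial A) : W.toFun (-f) = W.toFun f := by
  have h := W.map_mul' (-1) (-1)
  rw [neg_mul_neg, one_mul, W.one_eq_zero] at h
  obtain ⟨a, ha⟩ := WithTop.ne_top_iff_exists.mp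
    (W.ne_top' (-1) (neg_ne_zero.mpr one_ne_zero))
  rw [← ha] at h
  norm_cast at h
  have ha0 : a = 0 := by
    rcases lt_trichotomy a 0 with hlt | he | hgt
    · have h2 : a + a < 0 + 0 := add_lt_add hlt hlt
      rw [add_zero, ← h] at h2
      exact absurd h2 (lt_irrefl _)
    · exact he
    · have h2 : (0:Γ) + 0 < a + a := add_lt_add hgt hgt
      rw [add_zero, ← h] at h2
      exact absurd h2 (lt_irrefl _)
  have h2 := W.map_mul' (-1) f
  rw [neg_one_mul] at h2
  rw [h2, ← ha, ha0]
  simp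

lemma add_eq_left {f g : Polynomial A} (h : W.toFun f < W.toFun g) :
    W.toFun (f + g) = W.toFun f := by
  apply le_antisymm
  · by_contra hc
    push_neg at hc
    have he : f = (f + g) + (-g) := by ring
    have hmin := W.add_min' (f + g) (-g)
    rw [W.neg_eq, ← he] at hmin
    exact absurd hmin (not_le.mpr (lt_min hc h))
  · exact le_trans (le_min le_rfl h.le) (W.add_min' f g)

lemma le_sum_add {ι : Type*} (s : Finset ι) (g : ι → Polynomial A) (c e : WithTop Γ)
    (h : ∀ i ∈ s, c ≤ W.toFun (g i) + e) : c ≤ W.toFun (∑ i ∈ s, g i) + e := by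
  classical
  induction s using Finset.cons_induction with
  | empty => simp [W.map_zero']
  | cons a s ha ih =>
    rw [Finset.sum_cons]
    have h1 := h a (Finset.mem_cons_self a s)
    have h2 := ih fun i hi => h i (Finset.mem_cons_of_mem hi)
    calc c ≤ min (W.toFun (g a)) (W.toFun (∑ i ∈ s, g i)) + e := by
          rw [← min_add_add_right]; exact le_min h1 h2
      _ ≤ _ := add_le_add_left (W.add_min' _ _) e

lemma lt_sum_add {ι : Type*} (s : Finset ι) (g : ι → Polynomial A) (c e : WithTop Γ)
    (hc : c ≠ ⊤) (h : ∀ i ∈ s, c < W.toFun (g i) + e) :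
    c < W.toFun (∑ i ∈ s, g i) + e := by
  classical
  induction s using Finset.cons_induction with
  | empty => simp [W.map_zero', lt_top_iff_ne_top, hc]
  | cons a s ha ih =>
    rw [Finset.sum_cons]
    have h1 := h a (Finset.mem_cons_self a s)
    have h2 := ih fun i hi => h i (Finset.mem_cons_of_mem hi)
    calc c < min (W.toFun (g a)) (W.toFun (∑ i ∈ s, g i)) + e := by
          rw [← min_add_add_right]; exact lt_min h1 h2
      _ ≤ _ := add_le_add_left (W.add_min' _ _) e

lemma sum_eq_of_min {ι : Type*} (s : Finset ι) (g : ι → Polynomial A) (i₀ : ι)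
    (hi₀ : i₀ ∈ s) (h : ∀ j ∈ s, j ≠ i₀ → W.toFun (g i₀) < W.toFun (g j)) :
    W.toFun (∑ i ∈ s, g i) = W.toFun (g i₀) := by
  classical
  rw [← Finset.add_sum_erase s g hi₀]
  rcases eq_or_ne (W.toFun (g i₀)) ⊤ with htop | htop
  · have he : s.erase i₀ = ∅ := by
      by_contra hne
      obtain ⟨j, hj⟩ := Finset.nonempty_of_ne_empty hne
      have := h j (Finset.mem_of_mem_erase hj) (Finset.ne_of_mem_erase hj)
      rw [htop] at this
      exact absurd this (not_top_lt)
    simp [he]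
  · apply W.add_eq_left
    have := W.lt_sum_add (s.erase i₀) g (W.toFun (g i₀)) 0 htop
      (fun j hj => by
        rw [add_zero]
        exact h j (Finset.mem_of_mem_erase hj) (Finset.ne_of_mem_erase hj))
    rwa [add_zero] at this

end ValOn

/-- Hasse-derivative data for `f` with slope `d` and critical index `a`. -/
def HD (W : ValOn (Polynomial A) Γ) (d : Γ) (a : ℕ) (f : Polynomial A) : Prop :=
  (∀ b : ℕ, W.toFun f ≤ W.toFun (hasseDeriv b f) + ((b • d : Γ) : WithTop Γ)) ∧
  (W.toFun (hasseDeriv a f) + ((a • d : Γ) : WithTop Γ) = W.toFun f) ∧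
  (∀ b : ℕ, a < b → W.toFun f < W.toFun (hasseDeriv b f) + ((b • d : Γ) : WithTop Γ))

namespace HD

variable {W : ValOn (Polynomial A) Γ} {d : Γ} {a a' : ℕ} {f g : Polynomial A}

lemma ne_top (h : HD W d a f) : W.toFun f ≠ ⊤ :=
  ne_top_of_lt (h.2.2 (a + 1) (Nat.lt_succ_self a))

lemma mul (hf : HD W d a f) (hg : HD W d a' g) : HD W d (a + a') (f * g) := by
  have hft := hf.ne_top
  have hgt := hg.ne_top
  have hmul : W.toFun (f * g) = W.toFun f + W.toFun g := W.map_mul' f g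
  have key : ∀ j k : ℕ, W.toFun f + W.toFun g ≤
      (W.toFun (hasseDeriv j f) + ((j • d : Γ) : WithTop Γ)) +
      (W.toFun (hasseDeriv k g) + ((k • d : Γ) : WithTop Γ)) :=
    fun j k => add_le_add (hf.1 j) (hg.1 k)
  have keylt : ∀ j k : ℕ, (a < j ∨ a' < k) → W.toFun f + W.toFun g <
      (W.toFun (hasseDeriv j f) + ((j • d : Γ) : WithTop Γ)) +
      (W.toFun (hasseDeriv k g) + ((k • d : Γ) : WithTop Γ)) := by
    rintro j k (hj | hk)
    · exact lt_of_lt_of_le (WithTop.add_lt_add_right hgt (hf.2.2 j hj))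
        (add_le_add_right (hg.1 k) _)
    · exact lt_of_lt_of_le (WithTop.add_lt_add_left hft (hg.2.2 k hk))
        (add_le_add_left (hf.1 j) _)
  have rearr : ∀ (b j k : ℕ), j + k = b →
      W.toFun (hasseDeriv j f * hasseDeriv k g) + ((b • d : Γ) : WithTop Γ)
      = (W.toFun (hasseDeriv j f) + ((j • d : Γ) : WithTop Γ)) +
        (W.toFun (hasseDeriv k g) + ((k • d : Γ) : WithTop Γ)) := by
    intro b j k hjk
    rw [W.map_mul', ← hjk, add_nsmul, WithTop.coe_add, add_add_add_comm]
  refine ⟨?_, ?_, ?_⟩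
  · intro b
    rw [hasseDeriv_mul, hmul]
    exact W.le_sum_add _ _ _ _ (fun ij hij => by
      rw [rearr b ij.1 ij.2 (Finset.HasAntidiagonal.mem_antidiagonal.mp hij)]
      exact key ij.1 ij.2)
  · rw [hasseDeriv_mul]
    have heq : W.toFun (∑ ij ∈ antidiagonal (a + a'), hasseDeriv ij.1 f * hasseDeriv ij.2 g)
        = W.toFun (hasseDeriv a f * hasseDeriv a' g) := by
      apply W.sum_eq_of_min _ _ (a, a') (Finset.HasAntidiagonal.mem_antidiagonal.mpr rfl)
      rintro ⟨j, k⟩ hjk hne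
      have hsum : j + k = a + a' := Finset.HasAntidiagonal.mem_antidiagonal.mp hjk
      have hor : a < j ∨ a' < k := by
        by_contra hcon
        push_neg at hcon
        have hj : j = a := by omega
        have hk : k = a' := by omega
        exact hne (by rw [hj, hk])
      have h1 := keylt j k hor
      rw [← rearr (a + a') j k hsum] at h1
      have h2 : W.toFun (hasseDeriv a f * hasseDeriv a' g) + (((a + a') • d : Γ) : WithTop Γ)
          = W.toFun f + W.toFun g := by
        rw [rearr (a + a') a a' rfl, hf.2.1, hg.2.1]
      rw [← h2] at h1
      exact (WithTop.add_lt_add_iff_right (WithTop.coe_ne_top)).mp h1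
    rw [heq, rearr (a + a') a a' rfl, hf.2.1, hg.2.1, hmul]
  · intro b hb
    rw [hasseDeriv_mul, hmul]
    apply W.lt_sum_add _ _ _ _ (WithTop.add_ne_top.mpr ⟨hft, hgt⟩)
    rintro ⟨j, k⟩ hjk
    have hsum : j + k = b := Finset.HasAntidiagonal.mem_antidiagonal.mp hjk
    have hor : a < j ∨ a' < k := by omega
    rw [rearr b j k hsum]
    exact keylt j k hor

lemma one : HD W d 0 1 := by
  refine ⟨?_, ?_, ?_⟩
  · intro b
    cases b with
    | zero => simp [hasseDeriv_zero']
    | succ m =>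
      rw [hasseDeriv_apply_one _ (Nat.succ_pos m), W.map_zero']
      simp
  · simp [hasseDeriv_zero']
  · intro b hb
    rw [hasseDeriv_apply_one _ hb, W.map_zero', W.one_eq_zero]
    simp [lt_top_iff_ne_top]

lemma pow {c : ℕ} {Q : Polynomial A} (hQ : HD W d c Q) : ∀ i : ℕ, HD W d (i * c) (Q ^ i) := by
  intro i
  induction i with
  | zero => simpa using (one (W := W) (d := d))
  | succ m ih =>
    have := ih.mul hQ
    rw [← pow_succ] at this
    have harith : m * c + c = (m + 1) * c := by ring
    rwa [harith] at this

end HD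

end StatementThirteen
section PartB

open Polynomial Finset

variable {B : Type*} [Field B] {Γ : Type*} [AddCommGroup Γ] [LinearOrder Γ] [IsOrderedAddMonoid Γ]

namespace ValOn

lemma le_add_add (W : ValOn (Polynomial B) Γ) {x y : Polynomial B} {c e : WithTop Γ}
    (h1 : c ≤ W.toFun x + e) (h2 : c ≤ W.toFun y + e) : c ≤ W.toFun (x + y) + e :=
  calc c ≤ min (W.toFun x) (W.toFun y) + e := by
        rw [← min_add_add_right]; exact le_min h1 h2
    _ ≤ _ := add_le_add_left (W.add_min' _ _) e

lemma lt_add_add (W : ValOn (Polynomial B) Γ) {x y : Polynomial B} {c e : WithTop Γ}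
    (h1 : c < W.toFun x + e) (h2 : c < W.toFun y + e) : c < W.toFun (x + y) + e :=
  calc c < min (W.toFun x) (W.toFun y) + e := by
        rw [← min_add_add_right]; exact lt_min h1 h2
    _ ≤ _ := add_le_add_left (W.add_min' _ _) e

end ValOn

lemma hasse_linear_step (z : B) (P : Polynomial B) (m : ℕ) :
    hasseDeriv (m + 1) ((X - C z) * P) =
      (X - C z) * hasseDeriv (m + 1) P + hasseDeriv m P := by
  rw [hasseDeriv_mul, Finset.Nat.sum_antidiagonal_eq_sum_range_succ_mk]
  have hsub : ({0, 1} : Finset ℕ) ⊆ Finset.range (m + 1 + 1) := by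
    intro x hx
    simp only [Finset.mem_insert, Finset.mem_singleton] at hx
    rcases hx with rfl | rfl <;> simp [Finset.mem_range] <;> omega
  rw [← Finset.sum_subset hsub (fun x hx hnx => by
    have hx2 : 1 < x := by
      simp only [Finset.mem_insert, Finset.mem_singleton] at hnx
      omega
    have hz : hasseDeriv x (X - C z) = 0 := by
      rw [map_sub, hasseDeriv_X (k := x) hx2, hasseDeriv_C (k := x) z (by omega), sub_zero]
    rw [hz, zero_mul])]
  rw [Finset.sum_insert (by norm_num), Finset.sum_singleton]
  norm_num [hasseDeriv_zero', hasseDeriv_one', derivative_X_sub_C]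

variable {W : ValOn (Polynomial B) Γ} {z : B} {d : Γ} {a : ℕ} {P : Polynomial B}

private lemma esucc (m : ℕ) :
    (((m + 1) • d : Γ) : WithTop Γ) = ((m • d : Γ) : WithTop Γ) + (d : WithTop Γ) := by
  rw [succ_nsmul, WithTop.coe_add]

lemma hd_step_lt (h : HD W d a P) (hz : W.toFun (X - C z) < (d : WithTop Γ)) :
    HD W d a ((X - C z) * P) := by
  have hPt := h.ne_top
  have hzt : W.toFun (X - C z) ≠ ⊤ := ne_top_of_lt hz
  have hmul : W.toFun ((X - C z) * P) = W.toFun (X - C z) + W.toFun P := W.map_mul' _ _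
  have ht1 : ∀ b : ℕ, W.toFun ((X - C z) * hasseDeriv b P) + ((b • d : Γ) : WithTop Γ)
      = W.toFun (X - C z) + (W.toFun (hasseDeriv b P) + ((b • d : Γ) : WithTop Γ)) := by
    intro b; rw [W.map_mul', add_assoc]
  have ht2 : ∀ m : ℕ, W.toFun P + (d : WithTop Γ) ≤
      W.toFun (hasseDeriv m P) + (((m + 1) • d : Γ) : WithTop Γ) := by
    intro m
    rw [esucc, ← add_assoc]
    exact add_le_add_left (h.1 m) _
  have hwd : W.toFun P + W.toFun (X - C z) < W.toFun P + (d : WithTop Γ) :=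
    WithTop.add_lt_add_left hPt hz
  refine ⟨?_, ?_, ?_⟩
  · intro b
    cases b with
    | zero => simp [hasseDeriv_zero', zero_nsmul]
    | succ m =>
      rw [hasse_linear_step]
      apply W.le_add_add
      · rw [ht1, hmul]
        exact add_le_add_right (h.1 (m + 1)) _
      · rw [hmul, add_comm (W.toFun (X - C z))]
        exact le_trans hwd.le (ht2 m)
  · cases a with
    | zero => simp [hasseDeriv_zero', zero_nsmul]
    | succ n =>
      rw [hasse_linear_step]
      have v1 : W.toFun ((X - C z) * hasseDeriv (n + 1) P) + (((n + 1) • d : Γ) : WithTop Γ)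
          = W.toFun ((X - C z) * P) := by
        rw [ht1, h.2.1, hmul]
      have v2 : W.toFun ((X - C z) * P) <
          W.toFun (hasseDeriv n P) + (((n + 1) • d : Γ) : WithTop Γ) := by
        rw [hmul, add_comm (W.toFun (X - C z))]
        exact lt_of_lt_of_le hwd (ht2 n)
      have hlt : W.toFun ((X - C z) * hasseDeriv (n + 1) P) < W.toFun (hasseDeriv n P) := by
        rw [← v1] at v2
        exact (WithTop.add_lt_add_iff_right (WithTop.coe_ne_top)).mp v2
      rw [W.add_eq_left hlt, v1]
  · intro b hb
    cases b with
    | zero => omega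
    | succ m =>
      rw [hasse_linear_step]
      apply W.lt_add_add
      · rw [ht1, hmul]
        exact WithTop.add_lt_add_left hzt (h.2.2 (m + 1) hb)
      · rw [hmul, add_comm (W.toFun (X - C z))]
        exact lt_of_lt_of_le hwd (ht2 m)

lemma hd_step_eq (h : HD W d a P) (hz : W.toFun (X - C z) = (d : WithTop Γ)) :
    HD W d (a + 1) ((X - C z) * P) := by
  have hPt := h.ne_top
  have hzt : W.toFun (X - C z) ≠ ⊤ := by rw [hz]; exact WithTop.coe_ne_top
  have hmul : W.toFun ((X - C z) * P) = W.toFun (X - C z) + W.toFun P := W.map_mul' _ _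
  have ht1 : ∀ b : ℕ, W.toFun ((X - C z) * hasseDeriv b P) + ((b • d : Γ) : WithTop Γ)
      = W.toFun (X - C z) + (W.toFun (hasseDeriv b P) + ((b • d : Γ) : WithTop Γ)) := by
    intro b; rw [W.map_mul', add_assoc]
  have ht2 : ∀ m : ℕ, W.toFun (hasseDeriv m P) + (((m + 1) • d : Γ) : WithTop Γ)
      = (W.toFun (hasseDeriv m P) + ((m • d : Γ) : WithTop Γ)) + (d : WithTop Γ) := by
    intro m; rw [esucc, ← add_assoc]
  refine ⟨?_, ?_, ?_⟩
  · intro b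
    cases b with
    | zero => simp [hasseDeriv_zero', zero_nsmul]
    | succ m =>
      rw [hasse_linear_step]
      apply W.le_add_add
      · rw [ht1, hmul]
        exact add_le_add_right (h.1 (m + 1)) _
      · rw [hmul, ht2, add_comm (W.toFun (X - C z)), hz]
        exact add_le_add_left (h.1 m) _
  · rw [hasse_linear_step]
    have v2 : W.toFun (hasseDeriv a P) + (((a + 1) • d : Γ) : WithTop Γ)
        = W.toFun ((X - C z) * P) := by
      rw [ht2, h.2.1, hmul, add_comm (W.toFun (X - C z)), hz]
    have v1 : W.toFun ((X - C z) * P) <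
        W.toFun ((X - C z) * hasseDeriv (a + 1) P) + (((a + 1) • d : Γ) : WithTop Γ) := by
      rw [ht1, hmul]
      exact WithTop.add_lt_add_left hzt (h.2.2 (a + 1) (Nat.lt_succ_self a))
    have hlt : W.toFun (hasseDeriv a P) < W.toFun ((X - C z) * hasseDeriv (a + 1) P) := by
      rw [← v2] at v1
      exact (WithTop.add_lt_add_iff_right (WithTop.coe_ne_top)).mp v1
    rw [add_comm ((X - C z) * hasseDeriv (a + 1) P), W.add_eq_left hlt, v2]
  · intro b hb
    cases b with
    | zero => omega
    | succ m =>
      have hma : a < m := by omega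
      rw [hasse_linear_step]
      apply W.lt_add_add
      · rw [ht1, hmul]
        exact WithTop.add_lt_add_left hzt (h.2.2 (m + 1) (by omega))
      · rw [hmul, ht2, add_comm (W.toFun (X - C z)), hz]
        exact WithTop.add_lt_add_right WithTop.coe_ne_top (h.2.2 m hma)

lemma hd_C {cc : B} (hcc : cc ≠ 0) : HD W d 0 (C cc) := by
  have hne : W.toFun (C cc) ≠ ⊤ := W.ne_top' _ (by simp [hcc])
  refine ⟨?_, ?_, ?_⟩
  · intro b
    cases b with
    | zero => simp [hasseDeriv_zero', zero_nsmul]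
    | succ m =>
      rw [hasseDeriv_C (k := m + 1) cc (Nat.succ_pos m), W.map_zero']
      simp
  · simp [hasseDeriv_zero', zero_nsmul]
  · intro b hb
    rw [hasseDeriv_C (k := b) cc hb, W.map_zero']
    simp [lt_top_iff_ne_top, hne]

lemma clm (W : ValOn (Polynomial B) Γ) {cc : B} (hcc : cc ≠ 0) (d : Γ) :
    ∀ R : Multiset B, (∀ x ∈ R, W.toFun (X - C x) ≤ (d : WithTop Γ)) →
    HD W d (Multiset.card (R.filter (fun x => W.toFun (X - C x) = (d : WithTop Γ))))
      (C cc * (R.map (fun x => X - C x)).prod) := by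
  classical
  intro R
  induction R using Multiset.induction_on with
  | empty =>
    intro _
    simpa using hd_C hcc
  | cons x R ih =>
    intro hall
    have hx := hall x (Multiset.mem_cons_self x R)
    have hR := ih fun y hy => hall y (Multiset.mem_cons_of_mem hy)
    have hre : C cc * ((Multiset.map (fun x => X - C x) (x ::ₘ R)).prod)
        = (X - C x) * (C cc * (Multiset.map (fun x => X - C x) R).prod) := by
      rw [Multiset.map_cons, Multiset.prod_cons]; ring
    rw [hre, Multiset.filter_cons]
    by_cases hxd : W.toFun (X - C x) = (d : WithTop Γ)
    · rw [if_pos hxd]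
      have hcard : Multiset.card ({x} + Multiset.filter
          (fun x => W.toFun (X - C x) = (d : WithTop Γ)) R)
          = Multiset.card (Multiset.filter
            (fun x => W.toFun (X - C x) = (d : WithTop Γ)) R) + 1 := by
        rw [Multiset.card_add, Multiset.card_singleton]; omega
      rw [hcard]
      exact hd_step_eq hR hxd
    · rw [if_neg hxd]
      rw [zero_add]
      exact hd_step_lt hR (lt_of_le_of_ne hx hxd)

end PartB
section PartC

open Polynomial

variable {K' : Type*} [Field K'] {Q : Polynomial K'}

lemma degree_pow_monic (hQ : Q.Monic) (k : ℕ) :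
    (Q ^ k).degree = ((k * Q.natDegree : ℕ) : WithBot ℕ) := by
  rw [degree_eq_natDegree (hQ.pow k).ne_zero, hQ.natDegree_pow]

lemma div_pow_succ (hQ : Q.Monic) (hd : 0 < Q.natDegree) (f : Polynomial K') (k : ℕ) :
    f /ₘ Q ^ (k + 1) = (f /ₘ Q ^ k) /ₘ Q := by
  have hQk : (Q ^ k).Monic := hQ.pow k
  have hQk1 : (Q ^ (k + 1)).Monic := hQ.pow (k+1)
  have h1 := modByMonic_add_div f (Q ^ k)
  have h2 := modByMonic_add_div (f /ₘ Q ^ k) Q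
  refine (Polynomial.div_modByMonic_unique ((f /ₘ Q ^ k) /ₘ Q)
      (f %ₘ Q ^ k + Q ^ k * ((f /ₘ Q ^ k) %ₘ Q)) hQk1 ⟨?_, ?_⟩).1
  · rw [pow_succ]
    linear_combination h1 + (Q ^ k) * h2
  · have hb1 : (f %ₘ Q ^ k).degree < (Q ^ (k + 1)).degree := by
      calc (f %ₘ Q ^ k).degree < (Q ^ k).degree := degree_modByMonic_lt f hQk
        _ ≤ (Q ^ (k + 1)).degree := by
          rw [degree_pow_monic hQ, degree_pow_monic hQ]
          exact_mod_cast Nat.mul_le_mul_right _ (Nat.le_succ k)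
    have hb2 : (Q ^ k * ((f /ₘ Q ^ k) %ₘ Q)).degree < (Q ^ (k + 1)).degree := by
      rw [degree_mul, pow_succ, degree_mul]
      have hne : (Q ^ k).degree ≠ ⊥ := by
        rw [degree_pow_monic hQ]; exact WithBot.coe_ne_bot
      exact WithBot.add_lt_add_left hne (degree_modByMonic_lt _ hQ)
    exact lt_of_le_of_lt (degree_add_le _ _) (max_lt hb1 hb2)

lemma expansion_aux (hQ : Q.Monic) (hd : 0 < Q.natDegree) (f : Polynomial K') :
    ∀ k : ℕ, (∑ i ∈ Finset.range k, ((f /ₘ Q ^ i) %ₘ Q) * Q ^ i) + (f /ₘ Q ^ k) * Q ^ k = f := by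
  intro k
  induction k with
  | zero => simp [divByMonic_one]
  | succ k ih =>
    have hk := modByMonic_add_div (f /ₘ Q ^ k) Q
    have hstep : (f /ₘ Q ^ k) * Q ^ k
        = ((f /ₘ Q ^ k) %ₘ Q) * Q ^ k + (f /ₘ Q ^ (k + 1)) * Q ^ (k + 1) := by
      rw [div_pow_succ hQ hd f k, pow_succ]
      linear_combination (Q ^ k) * hk.symm
    rw [Finset.sum_range_succ, add_assoc, ← hstep, ih]

lemma expansion (hQ : Q.Monic) (hd : 0 < Q.natDegree) (f : Polynomial K') :
    (∑ i ∈ Finset.range (f.natDegree + 1), ((f /ₘ Q ^ i) %ₘ Q) * Q ^ i) = f := by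
  have h := expansion_aux hQ hd f (f.natDegree + 1)
  have hz : f /ₘ Q ^ (f.natDegree + 1) = 0 := by
    rw [Polynomial.divByMonic_eq_zero_iff (hQ.pow _)]
    calc f.degree ≤ (f.natDegree : WithBot ℕ) := degree_le_natDegree
      _ < (((f.natDegree + 1) * Q.natDegree : ℕ) : WithBot ℕ) := by
          exact_mod_cast by nlinarith [hd]
      _ = (Q ^ (f.natDegree + 1)).degree := (degree_pow_monic hQ _).symm
  rw [hz, zero_mul, add_zero] at h
  exact h

end PartC
section PartD

open Polynomial

variable {L : Type*} [Field L] [Algebra K L] [IsAlgClosure K L]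

lemma nsmul_lt_nsmul_gen {γ θ : Γ} (h : γ < θ) {n : ℕ} (hn : 0 < n) : n • γ < n • θ := by
  have haux : ∀ m : ℕ, m • γ ≤ m • θ := by
    intro m
    induction m with
    | zero => simp
    | succ k ih => rw [succ_nsmul, succ_nsmul]; exact add_le_add ih h.le
  obtain ⟨m, rfl⟩ := Nat.exists_eq_succ_of_ne_zero hn.ne'
  rw [succ_nsmul, succ_nsmul]
  exact add_lt_add_of_le_of_lt (haux m) h

lemma exists_max_val {α : Type*} (g : α → WithTop Γ) (S : Multiset α) (hS : S ≠ 0) :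
    ∃ x ∈ S, ∀ y ∈ S, g y ≤ g x := by
  induction S using Multiset.induction_on with
  | empty => exact absurd rfl hS
  | cons a S ih =>
    rcases eq_or_ne S 0 with rfl | hS0
    · refine ⟨a, Multiset.mem_cons_self a 0, fun y hy => ?_⟩
      rcases Multiset.mem_cons.mp hy with rfl | hy
      · exact le_rfl
      · exact absurd hy (Multiset.notMem_zero y)
    · obtain ⟨x, hxS, hmax⟩ := ih hS0
      rcases le_total (g a) (g x) with h | h
      · refine ⟨x, Multiset.mem_cons_of_mem hxS, fun y hy => ?_⟩
        rcases Multiset.mem_cons.mp hy with rfl | hy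
        · exact h
        · exact hmax y hy
      · refine ⟨a, Multiset.mem_cons_self a S, fun y hy => ?_⟩
        rcases Multiset.mem_cons.mp hy with rfl | hy
        · exact le_rfl
        · exact (hmax y hy).trans h

omit [Algebra K L] [IsAlgClosure K L] in
lemma hasse_map (φ : K →+* L) (b : ℕ) (f : Polynomial K) :
    (hasseDeriv b f).map φ = hasseDeriv b (f.map φ) := by
  ext n
  rw [coeff_map, hasseDeriv_coeff, hasseDeriv_coeff, coeff_map, map_mul, map_natCast]

omit [IsAlgClosure K L] in
lemma root_le_delta (wbar : ValOn (Polynomial L) Γ) (f : Polynomial K) {x : L}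
    (hx : x ∈ (f.map (algebraMap K L)).roots) :
    ((wbar.toFun (X - C x) : WithTop Γ) : WithBot (WithTop Γ)) ≤ delta wbar f :=
  Multiset.le_sup (Multiset.mem_map_of_mem _ hx)

omit [IsAlgClosure K L] in
lemma delta_attained (wbar : ValOn (Polynomial L) Γ) (f : Polynomial K)
    (hroots : (f.map (algebraMap K L)).roots ≠ 0) :
    ∃ θ : Γ, delta wbar f = ((θ : WithTop Γ) : WithBot (WithTop Γ)) ∧
      (∀ x ∈ (f.map (algebraMap K L)).roots, wbar.toFun (X - C x) ≤ (θ : WithTop Γ)) ∧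
      ∃ x ∈ (f.map (algebraMap K L)).roots, wbar.toFun (X - C x) = (θ : WithTop Γ) := by
  obtain ⟨x₀, hx₀, hmax⟩ := exists_max_val (Γ := Γ)
    (fun x => wbar.toFun (X - C x)) _ hroots
  have hne : wbar.toFun (X - C x₀) ≠ ⊤ := wbar.ne_top' _ (X_sub_C_ne_zero x₀)
  obtain ⟨θ, hθ⟩ := WithTop.ne_top_iff_exists.mp hne
  refine ⟨θ, ?_, fun x hx => hθ ▸ hmax x hx, x₀, hx₀, hθ.symm⟩
  apply le_antisymm
  · apply Multiset.sup_le.mpr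
    intro b hb
    obtain ⟨y, hy, rfl⟩ := Multiset.mem_map.mp hb
    exact_mod_cast (hmax y hy).trans_eq hθ.symm
  · have h1 := root_le_delta wbar f hx₀
    rw [← hθ] at h1
    exact h1

omit [IsAlgClosure K L] in
lemma delta_bot_of_no_roots (wbar : ValOn (Polynomial L) Γ) (f : Polynomial K)
    (hroots : (f.map (algebraMap K L)).roots = 0) :
    delta wbar f = ⊥ := by
  rw [delta, hroots]
  simp

omit [IsAlgClosure K L] in
lemma hd_transfer (wbar : ValOn (Polynomial L) Γ) (w : ValOn (Polynomial K) Γ)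
    (hw : ∀ f : Polynomial K, wbar.toFun (f.map (algebraMap K L)) = w.toFun f)
    {d : Γ} {a : ℕ} {g : Polynomial K}
    (h : HD wbar d a (g.map (algebraMap K L))) : HD w d a g := by
  have key : ∀ b : ℕ, wbar.toFun (hasseDeriv b (g.map (algebraMap K L)))
      = w.toFun (hasseDeriv b g) := by
    intro b; rw [← hasse_map, hw]
  refine ⟨fun b => ?_, ?_, fun b hb => ?_⟩
  · have := h.1 b; rwa [hw, key] at this
  · have := h.2.1; rwa [hw, key] at this
  · have := h.2.2 b hb; rwa [hw, key] at this

lemma hd_of_roots (wbar : ValOn (Polynomial L) Γ) (w : ValOn (Polynomial K) Γ)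
    (hw : ∀ f : Polynomial K, wbar.toFun (f.map (algebraMap K L)) = w.toFun f)
    (g : Polynomial K) (hg : g ≠ 0) (d : Γ)
    (hall : ∀ x ∈ (g.map (algebraMap K L)).roots,
      wbar.toFun (X - C x) ≤ (d : WithTop Γ)) :
    HD w d (Multiset.card ((g.map (algebraMap K L)).roots.filter
      (fun x => wbar.toFun (X - C x) = (d : WithTop Γ)))) g := by
  classical
  haveI : IsAlgClosed L := IsAlgClosure.isAlgClosed K
  have hmapne : g.map (algebraMap K L) ≠ 0 := by
    intro h0
    exact hg (Polynomial.map_injective _ (algebraMap K L).injective (by simpa using h0))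
  have hlc : (g.map (algebraMap K L)).leadingCoeff ≠ 0 := leadingCoeff_ne_zero.mpr hmapne
  have hclm := clm wbar hlc d ((g.map (algebraMap K L)).roots) hall
  have heq := Polynomial.Splits.eq_prod_roots
    (IsAlgClosed.splits (g.map (algebraMap K L)))
  rw [← heq] at hclm
  exact hd_transfer wbar w hw hclm

lemma hd_Q (wbar : ValOn (Polynomial L) Γ) (w : ValOn (Polynomial K) Γ)
    (hw : ∀ f : Polynomial K, wbar.toFun (f.map (algebraMap K L)) = w.toFun f)
    (Q : Polynomial K) (hQm : Q.Monic) (γ : Γ)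
    (hγQ : delta wbar Q = ((γ : WithTop Γ) : WithBot (WithTop Γ))) :
    ∃ c : ℕ, 0 < c ∧ HD w γ c Q := by
  classical
  have hroots : (Q.map (algebraMap K L)).roots ≠ 0 := by
    intro h0
    rw [delta_bot_of_no_roots wbar Q h0] at hγQ
    exact absurd hγQ.symm (WithBot.coe_ne_bot)
  obtain ⟨θ, hθeq, hθall, x₁, hx₁, hx₁eq⟩ := delta_attained wbar Q hroots
  have hθγ : θ = γ := by
    rw [hθeq] at hγQ
    exact_mod_cast hγQ
  subst hθγ
  refine ⟨_, ?_, hd_of_roots wbar w hw Q hQm.ne_zero θ hθall⟩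
  rw [Multiset.card_pos]
  intro hnil
  rw [Multiset.filter_eq_nil] at hnil
  exact hnil x₁ hx₁ hx₁eq

lemma hd_small (wbar : ValOn (Polynomial L) Γ) (w : ValOn (Polynomial K) Γ)
    (hw : ∀ f : Polynomial K, wbar.toFun (f.map (algebraMap K L)) = w.toFun f)
    (Q : Polynomial K) (γ : Γ)
    (hγQ : delta wbar Q = ((γ : WithTop Γ) : WithBot (WithTop Γ)))
    (g : Polynomial K) (hg : g ≠ 0) (hδ : delta wbar g < delta wbar Q) :
    HD w γ 0 g := by
  classical
  have hall : ∀ x ∈ (g.map (algebraMap K L)).roots,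
      wbar.toFun (X - C x) ≤ (γ : WithTop Γ) := by
    intro x hx
    have h1 := (root_le_delta wbar g hx).trans hδ.le
    rw [hγQ] at h1
    exact_mod_cast h1
  have hltall : ∀ x ∈ (g.map (algebraMap K L)).roots,
      ¬ wbar.toFun (X - C x) = (γ : WithTop Γ) := by
    intro x hx heq
    have h1 := root_le_delta wbar g hx
    rw [heq, ← hγQ] at h1
    exact absurd (lt_of_le_of_lt h1 hδ) (lt_irrefl _)
  have h := hd_of_roots wbar w hw g hg γ hall
  have hzero : Multiset.card ((g.map (algebraMap K L)).roots.filter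
      (fun x => wbar.toFun (X - C x) = (γ : WithTop Γ))) = 0 := by
    rw [Multiset.card_eq_zero, Multiset.filter_eq_nil]
    exact hltall
  rwa [hzero] at h

omit [Algebra K L] [IsAlgClosure K L] in
lemma trunc_le (w : ValOn (Polynomial K) Γ) (Q : Polynomial K) (f : Polynomial K) (i : ℕ)
    (hi : i ∈ Finset.range (f.natDegree + 1)) :
    truncVal w Q f ≤ w.toFun ((f /ₘ Q ^ i) %ₘ Q * Q ^ i) :=
  Finset.inf_le hi

lemma t3 (wbar : ValOn (Polynomial L) Γ) (w : ValOn (Polynomial K) Γ)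
    (hw : ∀ f : Polynomial K, wbar.toFun (f.map (algebraMap K L)) = w.toFun f)
    (Q : Polynomial K) (hQm : Q.Monic) (hQdeg : 0 < Q.natDegree) (γ : Γ)
    (hγQ : delta wbar Q = ((γ : WithTop Γ) : WithBot (WithTop Γ)))
    (habkp : ∀ f : Polynomial K, f ≠ 0 → f.degree < Q.degree → delta wbar f < delta wbar Q)
    (g : Polynomial K) (hg : g ≠ 0) (hδ : delta wbar Q < delta wbar g) :
    truncVal w Q g < w.toFun g := by
  classical
  have hroots : (g.map (algebraMap K L)).roots ≠ 0 := by
    intro h0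
    rw [delta_bot_of_no_roots wbar g h0] at hδ
    exact absurd hδ not_lt_bot
  obtain ⟨θ, hθeq, hθall, x₁, hx₁, hx₁eq⟩ := delta_attained wbar g hroots
  have hγθ : γ < θ := by
    rw [hγQ, hθeq] at hδ
    exact_mod_cast hδ
  have HDg := hd_of_roots wbar w hw g hg θ hθall
  set cg := Multiset.card ((g.map (algebraMap K L)).roots.filter
    (fun x => wbar.toFun (X - C x) = (θ : WithTop Γ))) with hcg_def
  have hcgpos : 0 < cg := by
    rw [hcg_def, Multiset.card_pos]
    intro hnil
    rw [Multiset.filter_eq_nil] at hnil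
    exact hnil x₁ hx₁ hx₁eq
  obtain ⟨cQ, hcQpos, hdQ⟩ := hd_Q wbar w hw Q hQm γ hγQ
  have hexp := expansion hQm hQdeg g
  have key1 : truncVal w Q g ≤ w.toFun (hasseDeriv cg g) + ((cg • γ : Γ) : WithTop Γ) := by
    have hD : hasseDeriv cg g = ∑ i ∈ Finset.range (g.natDegree + 1),
        hasseDeriv cg (((g /ₘ Q ^ i) %ₘ Q) * Q ^ i) := by
      conv_lhs => rw [← hexp]
      exact map_sum (hasseDeriv cg) _ _
    rw [hD]
    apply w.le_sum_add
    intro i hi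
    rcases eq_or_ne ((g /ₘ Q ^ i) %ₘ Q) 0 with hzero | hnz
    · rw [hzero, zero_mul, map_zero, w.map_zero']
      simp
    · have hsm : HD w γ 0 ((g /ₘ Q ^ i) %ₘ Q) :=
        hd_small wbar w hw Q γ hγQ _ hnz
          (habkp _ hnz (degree_modByMonic_lt _ hQm))
      have hprod := hsm.mul (hdQ.pow i)
      rw [zero_add] at hprod
      exact le_trans (trunc_le w Q g i hi) (hprod.1 cg)
  have hwgne : w.toFun g ≠ ⊤ := w.ne_top' g hg
  have hexact := HDg.2.1
  have hdne : w.toFun (hasseDeriv cg g) ≠ ⊤ := by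
    intro h
    rw [h, top_add] at hexact
    exact hwgne hexact.symm
  have hlt : w.toFun (hasseDeriv cg g) + ((cg • γ : Γ) : WithTop Γ)
      < w.toFun (hasseDeriv cg g) + ((cg • θ : Γ) : WithTop Γ) := by
    apply WithTop.add_lt_add_left hdne
    exact_mod_cast nsmul_lt_nsmul_gen hγθ hcgpos
  calc truncVal w Q g ≤ _ := key1
    _ < _ := hlt
    _ = w.toFun g := hexact

lemma t2 (wbar : ValOn (Polynomial L) Γ) (w : ValOn (Polynomial K) Γ)
    (hw : ∀ f : Polynomial K, wbar.toFun (f.map (algebraMap K L)) = w.toFun f)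
    (Q : Polynomial K) (hQm : Q.Monic) (hQdeg : 0 < Q.natDegree) (γ : Γ)
    (hγQ : delta wbar Q = ((γ : WithTop Γ) : WithBot (WithTop Γ)))
    (habkp : ∀ f : Polynomial K, f ≠ 0 → f.degree < Q.degree → delta wbar f < delta wbar Q)
    (g : Polynomial K) (hg : g ≠ 0) (htv : truncVal w Q g < w.toFun g) :
    delta wbar Q < delta wbar g := by
  classical
  by_contra hcon
  push_neg at hcon
  have hall : ∀ x ∈ (g.map (algebraMap K L)).roots,
      wbar.toFun (X - C x) ≤ (γ : WithTop Γ) := by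
    intro x hx
    have h1 := (root_le_delta wbar g hx).trans hcon
    rw [hγQ] at h1
    exact_mod_cast h1
  have HDg := hd_of_roots wbar w hw g hg γ hall
  obtain ⟨cQ, hcQpos, hdQ⟩ := hd_Q wbar w hw Q hQm γ hγQ
  have hexp := expansion hQm hQdeg g
  set tv := truncVal w Q g with htv_def
  have htvne : tv ≠ ⊤ := ne_top_of_lt htv
  set Att := (Finset.range (g.natDegree + 1)).filter
    (fun i => w.toFun (((g /ₘ Q ^ i) %ₘ Q) * Q ^ i) = tv) with hAtt_def
  have hAttne : Att.Nonempty := by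
    obtain ⟨i, hi, hieq⟩ := Finset.exists_mem_eq_inf (Finset.range (g.natDegree + 1))
      ⟨0, Finset.mem_range.mpr (Nat.succ_pos _)⟩
      (fun i => w.toFun (((g /ₘ Q ^ i) %ₘ Q) * Q ^ i))
    exact ⟨i, Finset.mem_filter.mpr ⟨hi, hieq.symm⟩⟩
  set i₀ := Att.max' hAttne with hi₀_def
  have hi₀att : i₀ ∈ Att := Att.max'_mem hAttne
  have hi₀r : i₀ ∈ Finset.range (g.natDegree + 1) := (Finset.mem_filter.mp hi₀att).1
  have hi₀eq : w.toFun (((g /ₘ Q ^ i₀) %ₘ Q) * Q ^ i₀) = tv := (Finset.mem_filter.mp hi₀att).2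
  have hnotatt : ∀ j ∈ Finset.range (g.natDegree + 1), j ∉ Att →
      tv < w.toFun (((g /ₘ Q ^ j) %ₘ Q) * Q ^ j) := by
    intro j hj hjn
    apply lt_of_le_of_ne (trunc_le w Q g j hj)
    intro heq
    exact hjn (Finset.mem_filter.mpr ⟨hj, heq.symm⟩)
  have hi₀pos : 0 < i₀ := by
    rcases Nat.eq_zero_or_pos i₀ with h0 | h
    · exfalso
      have hwg : w.toFun g = tv := by
        conv_lhs => rw [← hexp]
        rw [w.sum_eq_of_min _ _ i₀ hi₀r ?_, hi₀eq]
        intro j hj hne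
        rw [hi₀eq]
        apply hnotatt j hj
        intro hjatt
        have := Att.le_max' j hjatt
        omega
      rw [hwg] at htv
      exact absurd htv (lt_irrefl _)
    · exact h
  set b := i₀ * cQ with hb_def
  have hco : ((g /ₘ Q ^ i₀) %ₘ Q) ≠ 0 := by
    intro h0
    rw [h0, zero_mul, w.map_zero'] at hi₀eq
    exact htvne hi₀eq.symm
  have hprod₀ : HD w γ b (((g /ₘ Q ^ i₀) %ₘ Q) * Q ^ i₀) := by
    have hsm : HD w γ 0 ((g /ₘ Q ^ i₀) %ₘ Q) :=
      hd_small wbar w hw Q γ hγQ _ hco (habkp _ hco (degree_modByMonic_lt _ hQm))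
    have := hsm.mul (hdQ.pow i₀)
    rwa [zero_add] at this
  have hterm : ∀ j ∈ Finset.range (g.natDegree + 1), j ≠ i₀ →
      tv < w.toFun (hasseDeriv b (((g /ₘ Q ^ j) %ₘ Q) * Q ^ j)) + ((b • γ : Γ) : WithTop Γ) := by
    intro j hj hne
    rcases eq_or_ne ((g /ₘ Q ^ j) %ₘ Q) 0 with hzero | hnz
    · rw [hzero, zero_mul, map_zero, w.map_zero', top_add]
      exact lt_top_iff_ne_top.mpr htvne
    · have hsm : HD w γ 0 ((g /ₘ Q ^ j) %ₘ Q) :=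
        hd_small wbar w hw Q γ hγQ _ hnz (habkp _ hnz (degree_modByMonic_lt _ hQm))
      have hprodj := hsm.mul (hdQ.pow j)
      rw [zero_add] at hprodj
      rcases lt_or_gt_of_ne hne with hlt | hgt
      · have hjb : j * cQ < b := by
          rw [hb_def]
          exact Nat.mul_lt_mul_of_lt_of_le hlt (le_refl cQ) hcQpos
        calc tv ≤ w.toFun (((g /ₘ Q ^ j) %ₘ Q) * Q ^ j) := trunc_le w Q g j hj
          _ < _ := hprodj.2.2 b hjb
      · have hjn : j ∉ Att := by
          intro hjatt
          have := Att.le_max' j hjatt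
          omega
        calc tv < w.toFun (((g /ₘ Q ^ j) %ₘ Q) * Q ^ j) := hnotatt j hj hjn
          _ ≤ _ := hprodj.1 b
  have hkey : w.toFun (hasseDeriv b g) + ((b • γ : Γ) : WithTop Γ) = tv := by
    have hD : hasseDeriv b g = ∑ i ∈ Finset.range (g.natDegree + 1),
        hasseDeriv b (((g /ₘ Q ^ i) %ₘ Q) * Q ^ i) := by
      conv_lhs => rw [← hexp]
      exact map_sum (hasseDeriv b) _ _
    rw [hD]
    have hexact₀ : w.toFun (hasseDeriv b (((g /ₘ Q ^ i₀) %ₘ Q) * Q ^ i₀))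
        + ((b • γ : Γ) : WithTop Γ) = tv := by
      rw [hprod₀.2.1, hi₀eq]
    have hsum : w.toFun (∑ i ∈ Finset.range (g.natDegree + 1),
        hasseDeriv b (((g /ₘ Q ^ i) %ₘ Q) * Q ^ i))
        = w.toFun (hasseDeriv b (((g /ₘ Q ^ i₀) %ₘ Q) * Q ^ i₀)) := by
      apply w.sum_eq_of_min _ _ i₀ hi₀r
      intro j hj hne
      have h1 := hterm j hj hne
      rw [← hexact₀] at h1
      exact (WithTop.add_lt_add_iff_right WithTop.coe_ne_top).mp h1
    rw [hsum, hexact₀]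
  have hcontr := HDg.1 b
  rw [hkey] at hcontr
  exact absurd (lt_of_le_of_lt hcontr htv) (lt_irrefl _)

end PartD

/-- if `Q` is an abstract key polynomial for `w` with `w_Q < w`, then
every `F ∈ Φ(w_Q, w)` is an abstract key polynomial for `w` and `δ(Q) < δ(F)`. -/
theorem abkp_of_inPhi_trunc
    {K : Type*} [Field K] {Γ : Type*} [AddCommGroup Γ] [LinearOrder Γ] [IsOrderedAddMonoid Γ]
    {L : Type*} [Field L] [Algebra K L] [IsAlgClosure K L]
    (v : ValOn K Γ) (vbar : ValOn L Γ)
    (hvbar : ∀ c : K, vbar.toFun (algebraMap K L c) = v.toFun c)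
    (w : ValOn (Polynomial K) Γ) (hext : Extends w v)
    (wbar : ValOn (Polynomial L) Γ) (hcomm : IsCommonExt wbar w vbar)
    (Q : Polynomial K) (hQ : IsABKP wbar Q)
    (hlt : FnLt (truncVal w Q) w.toFun)
    (F : Polynomial K) (hF : InPhi (truncVal w Q) w.toFun F) :
    IsABKP wbar F ∧ delta wbar Q < delta wbar F := by
  classical
  obtain ⟨hQm, habkp⟩ := hQ
  have hw := hcomm.1
  have hQdeg : 0 < Q.natDegree := by
    by_contra h0
    push_neg at h0
    have hQ1 : Q = 1 := by
      have := Nat.le_zero.mp h0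
      exact hQm.natDegree_eq_zero.mp this
    obtain ⟨f, hf⟩ := hlt.2
    have htop : truncVal w Q f = ⊤ := by
      refine le_antisymm le_top (Finset.le_inf fun i hi => ?_)
      rw [hQ1, one_pow, Polynomial.modByMonic_one, zero_mul, w.map_zero']
    rw [htop] at hf
    exact absurd hf not_top_lt
  have hrootsQ : (Q.map (algebraMap K L)).roots ≠ 0 := by
    intro h0
    haveI : IsAlgClosed L := IsAlgClosure.isAlgClosed K
    have hmapne : Q.map (algebraMap K L) ≠ 0 := by
      intro hz
      exact hQm.ne_zero
        (Polynomial.map_injective _ (algebraMap K L).injective (by simpa using hz))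
    have hdeg : (Q.map (algebraMap K L)).degree ≠ 0 := by
      rw [Polynomial.degree_map, Polynomial.degree_eq_natDegree hQm.ne_zero]
      intro hc
      have : Q.natDegree = 0 := by exact_mod_cast hc
      omega
    obtain ⟨x, hx⟩ := IsAlgClosed.exists_root _ hdeg
    have hmem : x ∈ (Q.map (algebraMap K L)).roots :=
      (Polynomial.mem_roots'.mpr ⟨hmapne, hx⟩)
    rw [h0] at hmem
    exact absurd hmem (Multiset.notMem_zero x)
  obtain ⟨γ, hγQ, -, -⟩ := delta_attained wbar Q hrootsQ
  have hFne : F ≠ 0 := hF.1.ne_zero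
  have hT2F : delta wbar Q < delta wbar F :=
    t2 wbar w hw Q hQm hQdeg γ hγQ habkp F hFne hF.2.1
  refine ⟨⟨hF.1, ?_⟩, hT2F⟩
  intro f hf hdf
  set g := f * C (f.leadingCoeff)⁻¹ with hg_def
  have hgm : g.Monic := Polynomial.monic_mul_leadingCoeff_inv hf
  have hdeg : g.degree = f.degree := Polynomial.degree_mul_leadingCoeff_inv f hf
  have hroots_eq : (g.map (algebraMap K L)).roots = (f.map (algebraMap K L)).roots := by
    rw [hg_def, Polynomial.map_mul, Polynomial.map_C, mul_comm]
    apply Polynomial.roots_C_mul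
    rw [map_inv₀]
    exact inv_ne_zero (by
      intro hz
      exact (Polynomial.leadingCoeff_ne_zero.mpr hf)
        ((algebraMap K L).injective (by simpa using hz)))
  have hdelta : delta wbar g = delta wbar f := by
    rw [delta, delta, hroots_eq]
  have hδg : delta wbar g ≤ delta wbar Q := by
    by_contra hcon2
    push_neg at hcon2
    have ht3 := t3 wbar w hw Q hQm hQdeg γ hγQ habkp g hgm.ne_zero hcon2
    have hFle := hF.2.2 g hgm ht3
    rw [hdeg] at hFle
    exact absurd (lt_of_le_of_lt hFle hdf) (lt_irrefl _)
  calc delta wbar f = delta wbar g := hdelta.symm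
    _ ≤ delta wbar Q := hδg
    _ < delta wbar F := hT2F

end MLV
end

section
/- Let w be a valuation on K(X) and let w' < w be a valuation taking values in a subgroup of the value group of w. Then any φ ∈ Φ(w', w) is a key polynomial for w', and w' < [w'; φ, w(φ)] ≤ w. Moreover, for any nonzero polynomial f ∈ K[X], the equality w'(f) = w(f) holds if and only if φ ∤_{w'} f. -/
namespace MLV

open Polynomial

variable {K : Type*} [Field K] {Γ : Type*} [AddCommGroup Γ] [LinearOrder Γ] [IsOrderedAddMonoid Γ]

section Aux

variable {K : Type*} [Field K] {Γ : Type*} [AddCommGroup Γ] [LinearOrder Γ] [IsOrderedAddMonoid Γ]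

lemma add_self_zero {a : Γ} (h : a + a = 0) : a = 0 := by
  rcases lt_trichotomy a 0 with hl | he | hg
  · have h2 := add_lt_add hl hl
    rw [h, add_zero] at h2
    exact absurd h2 (lt_irrefl _)
  · exact he
  · have h2 := add_lt_add hg hg
    rw [h, add_zero] at h2
    exact absurd h2 (lt_irrefl _)

namespace ValOn

variable (u : ValOn (Polynomial K) Γ)

lemma vmap_one : u.toFun 1 = 0 := by
  have h := u.map_mul' 1 1
  rw [mul_one] at h
  obtain ⟨a, ha⟩ := WithTop.ne_top_iff_exists.mp (u.ne_top' 1 one_ne_zero)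
  rw [← ha] at h
  have h' : a + a = a := by exact_mod_cast h.symm
  have h0 : a = 0 := add_eq_right.mp h'
  rw [← ha, h0]; rfl

lemma vmap_neg (f : Polynomial K) : u.toFun (-f) = u.toFun f := by
  have h1 := u.map_mul' (-1) (-1)
  rw [neg_mul_neg, one_mul, vmap_one] at h1
  obtain ⟨a, ha⟩ := WithTop.ne_top_iff_exists.mp (u.ne_top' (-1) (by norm_num))
  rw [← ha] at h1
  have h2' : a + a = (0 : Γ) := by exact_mod_cast h1.symm
  have h0 : a = 0 := add_self_zero h2'
  have h2 := u.map_mul' (-1) f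
  rw [neg_one_mul, ← ha, h0] at h2
  simpa using h2

lemma vmap_sub_min (f g : Polynomial K) :
    min (u.toFun f) (u.toFun g) ≤ u.toFun (f - g) := by
  rw [sub_eq_add_neg]
  have := u.add_min' f (-g)
  rwa [vmap_neg] at this

lemma vmap_add_eq_left {f g : Polynomial K} (h : u.toFun f < u.toFun g) :
    u.toFun (f + g) = u.toFun f := by
  refine le_antisymm ?_ ?_
  · by_contra hc
    push_neg at hc
    have h3 := vmap_sub_min u (f + g) g
    rw [add_sub_cancel_right] at h3
    exact absurd h3 (not_le.mpr (lt_min hc h))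
  · have := u.add_min' f g
    rwa [min_eq_left h.le] at this

lemma vmap_pow (f : Polynomial K) (n : ℕ) : u.toFun (f ^ n) = n • u.toFun f := by
  induction n with
  | zero => simpa using vmap_one u
  | succ n ih => rw [pow_succ, u.map_mul', ih, succ_nsmul]

lemma inf_le_vmap_sum {ι : Type*} [DecidableEq ι] (s : Finset ι) (g : ι → Polynomial K) :
    (s.inf fun i => u.toFun (g i)) ≤ u.toFun (∑ i ∈ s, g i) := by
  induction s using Finset.cons_induction with
  | empty => simp [u.map_zero']
  | cons a s ha ih =>
    rw [Finset.sum_cons, Finset.inf_cons]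
    exact le_trans (min_le_min le_rfl ih) (u.add_min' _ _)

end ValOn

end Aux

section Div

variable {K : Type*} [Field K]

lemma divByMonic_divByMonic {p r : Polynomial K} (hp : p.Monic) (hr : r.Monic)
    (f : Polynomial K) : f /ₘ (p * r) = f /ₘ p /ₘ r := by
  have key := div_modByMonic_unique (f := f) (f /ₘ p /ₘ r)
      (p * ((f /ₘ p) %ₘ r) + f %ₘ p) (hp.mul hr) ⟨?_, ?_⟩
  · exact key.1
  · have h1 := modByMonic_add_div f p
    have h2 := modByMonic_add_div (f /ₘ p) r
    have h3 : p * ((f /ₘ p) %ₘ r) + f %ₘ p + p * r * (f /ₘ p /ₘ r)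
        = f %ₘ p + p * ((f /ₘ p) %ₘ r + r * (f /ₘ p /ₘ r)) := by ring
    rw [h3, h2, h1]
  · have hd1 : (p * ((f /ₘ p) %ₘ r)).degree < (p * r).degree := by
      rw [degree_mul, degree_mul]
      exact WithBot.add_lt_add_left
        (by rw [degree_eq_natDegree hp.ne_zero]; exact WithBot.coe_ne_bot)
        (degree_modByMonic_lt _ hr)
    have hd2 : (f %ₘ p).degree < (p * r).degree := by
      refine lt_of_lt_of_le (degree_modByMonic_lt _ hp) ?_
      rw [degree_mul]
      exact le_add_of_nonneg_right (zero_le_degree_iff.mpr hr.ne_zero)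
    exact lt_of_le_of_lt (degree_add_le _ _) (max_lt hd1 hd2)

lemma div_pow_succ_s16 {φ : Polynomial K} (hφ : φ.Monic) (f : Polynomial K) (i : ℕ) :
    f /ₘ φ ^ (i + 1) = (f /ₘ φ) /ₘ φ ^ i := by
  rw [pow_succ', divByMonic_divByMonic hφ (hφ.pow i)]

lemma deg_le_pow {φ : Polynomial K} (hφ : φ.Monic) {i : ℕ} (hi : i ≠ 0) :
    φ.degree ≤ (φ ^ i).degree :=
  degree_le_of_dvd (dvd_pow_self φ hi) (hφ.pow i).ne_zero

lemma expansion_sum {φ : Polynomial K} (hφ : φ.Monic) (hdeg : 0 < φ.degree) :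
    ∀ n : ℕ, ∀ f : Polynomial K, f.natDegree ≤ n →
      ∑ i ∈ Finset.range (n + 1), (f /ₘ φ ^ i) %ₘ φ * φ ^ i = f := by
  intro n
  induction n using Nat.strong_induction_on with
  | _ n ih =>
    intro f hf
    by_cases hlt : f.degree < φ.degree
    · have h0 : f %ₘ φ = f := (modByMonic_eq_self_iff hφ).mpr hlt
      rw [Finset.sum_eq_single_of_mem 0 (Finset.mem_range.mpr (Nat.succ_pos n)) ?_]
      · simp [divByMonic_one, h0]
      · intro i _ hi
        have hz : f /ₘ φ ^ i = 0 := (divByMonic_eq_zero_iff (hφ.pow i)).mpr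
          (lt_of_lt_of_le hlt (deg_le_pow hφ hi))
        rw [hz]
        simp
    · push_neg at hlt
      have hf0 : f ≠ 0 := by
        intro h
        rw [h, degree_zero] at hlt
        exact absurd (lt_of_lt_of_le hdeg hlt) (by simp)
      have hdφ : 0 < φ.natDegree := natDegree_pos_iff_degree_pos.mpr hdeg
      have hdf : φ.natDegree ≤ f.natDegree := natDegree_le_natDegree hlt
      obtain ⟨m, rfl⟩ : ∃ m, n = m + 1 := ⟨n - 1, by omega⟩
      set q := f /ₘ φ with hqdef
      have hqd : q.natDegree ≤ m := by
        rw [hqdef, natDegree_divByMonic f hφ]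
        omega
      have hsq := ih m (by omega) q hqd
      rw [Finset.sum_range_succ']
      have hstep : ∀ i : ℕ, (f /ₘ φ ^ (i + 1)) %ₘ φ * φ ^ (i + 1)
          = φ * ((q /ₘ φ ^ i) %ₘ φ * φ ^ i) := by
        intro i
        rw [div_pow_succ_s16 hφ, pow_succ']
        ring
      calc (∑ i ∈ Finset.range (m + 1), (f /ₘ φ ^ (i + 1)) %ₘ φ * φ ^ (i + 1))
            + (f /ₘ φ ^ 0) %ₘ φ * φ ^ 0
          = φ * (∑ i ∈ Finset.range (m + 1), (q /ₘ φ ^ i) %ₘ φ * φ ^ i) + f %ₘ φ := by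
            rw [Finset.mul_sum]
            refine congrArg₂ (· + ·) ?_ ?_
            · exact Finset.sum_congr rfl fun i _ => hstep i
            · simp [divByMonic_one]
        _ = φ * q + f %ₘ φ := by rw [hsq]
        _ = f := by rw [add_comm]; exact modByMonic_add_div f φ

end Div

section Main

variable {K : Type*} [Field K] {Γ : Type*} [AddCommGroup Γ] [LinearOrder Γ] [IsOrderedAddMonoid Γ]
  {w' w : ValOn (Polynomial K) Γ} {φ : Polynomial K}

/-- `w'` and `w` agree on nonzero constants. -/
lemma const_eq (hle : FnLe w'.toFun w.toFun) (c : K) (hc : c ≠ 0) :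
    w'.toFun (Polynomial.C c) = w.toFun (Polynomial.C c) := by
  have hcc : (Polynomial.C c : Polynomial K) ≠ 0 := by
    simpa using hc
  have hci : (Polynomial.C c⁻¹ : Polynomial K) ≠ 0 := by
    simpa using inv_ne_zero hc
  have h1 : w'.toFun (Polynomial.C c) + w'.toFun (Polynomial.C c⁻¹) = 0 := by
    rw [← w'.map_mul', ← Polynomial.C_mul, mul_inv_cancel₀ hc, Polynomial.C_1,
      ValOn.vmap_one]
  have h2 : w.toFun (Polynomial.C c) + w.toFun (Polynomial.C c⁻¹) = 0 := by
    rw [← w.map_mul', ← Polynomial.C_mul, mul_inv_cancel₀ hc, Polynomial.C_1,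
      ValOn.vmap_one]
  obtain ⟨a, ha⟩ := WithTop.ne_top_iff_exists.mp (w'.ne_top' _ hcc)
  obtain ⟨b, hb⟩ := WithTop.ne_top_iff_exists.mp (w'.ne_top' _ hci)
  obtain ⟨a', ha'⟩ := WithTop.ne_top_iff_exists.mp (w.ne_top' _ hcc)
  obtain ⟨b', hb'⟩ := WithTop.ne_top_iff_exists.mp (w.ne_top' _ hci)
  rw [← ha, ← hb] at h1
  rw [← ha', ← hb'] at h2
  have l1 : a ≤ a' := by rw [← WithTop.coe_le_coe, ha, ha']; exact hle _
  have l2 : b ≤ b' := by rw [← WithTop.coe_le_coe, hb, hb']; exact hle _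
  have e1 : a + b = (0 : Γ) := by exact_mod_cast h1
  have e2 : a' + b' = (0 : Γ) := by exact_mod_cast h2
  have key : a = a' := by
    refine le_antisymm l1 ?_
    rw [add_eq_zero_iff_eq_neg] at e1 e2
    rw [e1, e2]
    exact neg_le_neg l2
  rw [← ha, ← ha', key]

/-- `φ ∈ Φ(w',w)` has positive degree. -/
lemma phi_deg_pos (hφ : InPhi w'.toFun w.toFun φ) : 0 < φ.degree := by
  by_contra hc
  push_neg at hc
  have hn : φ.natDegree = 0 :=
    Nat.le_zero.mp (Polynomial.natDegree_le_iff_degree_le.mpr (by exact_mod_cast hc))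
  have h1 : φ = 1 := (Polynomial.Monic.natDegree_eq_zero hφ.1).mp hn
  have := hφ.2.1
  rw [h1, ValOn.vmap_one, ValOn.vmap_one] at this
  exact absurd this (lt_irrefl _)

/-- (A): `w'` and `w` agree below `deg φ`. -/
lemma low_deg_eq (hle : FnLe w'.toFun w.toFun) (hφ : InPhi w'.toFun w.toFun φ)
    (f : Polynomial K) (hdf : f.degree < φ.degree) : w'.toFun f = w.toFun f := by
  by_cases hf0 : f = 0
  · rw [hf0, w'.map_zero', w.map_zero']
  · set c := f.leadingCoeff with hc
    have hc0 : c ≠ 0 := Polynomial.leadingCoeff_ne_zero.mpr hf0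
    set h := f * Polynomial.C c⁻¹ with hh
    have hm : h.Monic := Polynomial.monic_mul_leadingCoeff_inv hf0
    have hdh : h.degree = f.degree := Polynomial.degree_mul_leadingCoeff_inv f hf0
    have heq : w'.toFun h = w.toFun h := by
      refine le_antisymm (hle h) ?_
      by_contra hb
      push_neg at hb
      have := hφ.2.2 h hm hb
      rw [hdh] at this
      exact absurd hdf (not_lt.mpr this)
    have hfh : f = h * Polynomial.C c := by
      rw [hh, mul_assoc, ← Polynomial.C_mul, inv_mul_cancel₀ hc0, Polynomial.C_1, mul_one]
    rw [hfh, w'.map_mul', w.map_mul', heq, const_eq hle c hc0]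

/-- (C⇐): if `φ ∣_{w'} f` for `f ≠ 0` then `w'(f) < w(f)`. -/
lemma dvd_imp_lt (hle : FnLe w'.toFun w.toFun) (hφ : InPhi w'.toFun w.toFun φ)
    (f : Polynomial K) (hf : f ≠ 0) (hd : DvdMod w'.toFun φ f) :
    w'.toFun f < w.toFun f := by
  obtain ⟨h, h1, h2⟩ := hd
  have hh0 : h ≠ 0 := by
    intro hz
    rw [hz, mul_zero, w'.map_zero'] at h2
    exact w'.ne_top' f hf h2
  -- w(φ h) > w'(φ h) = w'(f)
  have hmul : w'.toFun (φ * h) < w.toFun (φ * h) := by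
    rw [w'.map_mul', w.map_mul']
    obtain ⟨a, ha⟩ := WithTop.ne_top_iff_exists.mp (w'.ne_top' φ hφ.1.ne_zero)
    obtain ⟨b, hb⟩ := WithTop.ne_top_iff_exists.mp (w'.ne_top' h hh0)
    obtain ⟨a', ha'⟩ := WithTop.ne_top_iff_exists.mp (w.ne_top' φ hφ.1.ne_zero)
    obtain ⟨b', hb'⟩ := WithTop.ne_top_iff_exists.mp (w.ne_top' h hh0)
    rw [← ha, ← hb, ← ha', ← hb']
    have l1 : a < a' := by rw [← WithTop.coe_lt_coe, ha, ha']; exact hφ.2.1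
    have l2 : b ≤ b' := by rw [← WithTop.coe_le_coe, hb, hb']; exact hle h
    exact_mod_cast add_lt_add_of_lt_of_le l1 l2
  have hsub : w'.toFun f < w.toFun (f - φ * h) :=
    lt_of_lt_of_le h1 (hle _)
  have hvf : min (w.toFun (f - φ * h)) (w.toFun (φ * h)) ≤ w.toFun f := by
    have := w.add_min' (f - φ * h) (φ * h)
    rwa [sub_add_cancel] at this
  exact lt_of_lt_of_le (lt_min hsub (h2 ▸ hmul)) hvf

/-- (C⇒): if `w'(f) < w(f)` for `f ≠ 0` then `φ ∣_{w'} f`. -/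
lemma lt_imp_dvd (hle : FnLe w'.toFun w.toFun) (hφ : InPhi w'.toFun w.toFun φ)
    (f : Polynomial K) (hf : f ≠ 0) (hlt : w'.toFun f < w.toFun f) :
    DvdMod w'.toFun φ f := by
  have hφm := hφ.1
  have hdf : ¬ f.degree < φ.degree := fun h =>
    absurd (low_deg_eq hle hφ f h) (ne_of_lt hlt)
  set a := f %ₘ φ with hadef
  set q := f /ₘ φ with hqdef
  have hfe : a + φ * q = f := modByMonic_add_div f φ
  have hsub : a = f - φ * q := by rw [← hfe]; ring
  have hq0 : q ≠ 0 := by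
    intro hz
    rw [hz, mul_zero, add_zero] at hfe
    exact hdf (hfe ▸ degree_modByMonic_lt f hφm)
  by_cases ha0 : a = 0
  · refine ⟨q, ?_, ?_⟩
    · rw [← hsub, ha0, w'.map_zero']
      exact lt_top_iff_ne_top.mpr (w'.ne_top' f hf)
    · have : f = φ * q := by rw [← hfe, ha0, zero_add]
      rw [← this]
  · have key : w'.toFun (φ * q) < w'.toFun a := by
      by_contra hc
      push_neg at hc
      have h1 : w'.toFun a ≤ w'.toFun f := by
        have := w'.add_min' a (φ * q)
        rw [hfe, min_eq_left hc] at this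
        exact this
      have hνφq : w'.toFun (φ * q) < w.toFun (φ * q) := by
        rw [w'.map_mul', w.map_mul']
        obtain ⟨x, hx⟩ := WithTop.ne_top_iff_exists.mp (w'.ne_top' φ hφm.ne_zero)
        obtain ⟨y, hy⟩ := WithTop.ne_top_iff_exists.mp (w'.ne_top' q hq0)
        obtain ⟨x', hx'⟩ := WithTop.ne_top_iff_exists.mp (w.ne_top' φ hφm.ne_zero)
        obtain ⟨y', hy'⟩ := WithTop.ne_top_iff_exists.mp (w.ne_top' q hq0)
        rw [← hx, ← hy, ← hx', ← hy']
        have l1 : x < x' := by rw [← WithTop.coe_lt_coe, hx, hx']; exact hφ.2.1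
        have l2 : y ≤ y' := by rw [← WithTop.coe_le_coe, hy, hy']; exact hle q
        exact_mod_cast add_lt_add_of_lt_of_le l1 l2
      have h2 : w'.toFun a < w.toFun a := by
        have hmin : min (w.toFun f) (w.toFun (φ * q)) ≤ w.toFun a := by
          rw [hsub]; exact ValOn.vmap_sub_min w f (φ * q)
        refine lt_of_lt_of_le (lt_min ?_ ?_) hmin
        · exact lt_of_le_of_lt h1 hlt
        · exact lt_of_le_of_lt hc hνφq
      exact absurd (low_deg_eq hle hφ a (hadef ▸ degree_modByMonic_lt f hφm)) (ne_of_lt h2)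
    refine ⟨q, ?_, ?_⟩
    · have hval : w'.toFun f = w'.toFun (φ * q) := by
        rw [← hfe, add_comm]
        exact ValOn.vmap_add_eq_left w' key
      rw [← hsub, hval]
      exact key
    · rw [← hfe, add_comm]
      exact ValOn.vmap_add_eq_left w' key

/-- (F): `w' f ≤ min (w' (f %ₘ φ)) (w' (φ * (f /ₘ φ)))`. -/
lemma trunc_le_s16 (hle : FnLe w'.toFun w.toFun) (hφ : InPhi w'.toFun w.toFun φ)
    (f : Polynomial K) :
    w'.toFun f ≤ w'.toFun (f %ₘ φ) ∧ w'.toFun f ≤ w'.toFun (φ * (f /ₘ φ)) := by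
  have hφm := hφ.1
  set a := f %ₘ φ with hadef
  set q := f /ₘ φ with hqdef
  have hfe : a + φ * q = f := modByMonic_add_div f φ
  rcases lt_trichotomy (w'.toFun a) (w'.toFun (φ * q)) with hc | hc | hc
  · have h1 : w'.toFun f = w'.toFun a := by rw [← hfe]; exact ValOn.vmap_add_eq_left w' hc
    exact ⟨le_of_eq h1, h1 ▸ hc.le⟩
  · -- equal values: show w' f ≤ w' a
    have hmain : w'.toFun f ≤ w'.toFun a := by
      by_contra hb
      push_neg at hb
      have ha0 : a ≠ 0 := by
        intro hz
        rw [hz, w'.map_zero'] at hb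
        exact absurd hb (not_top_lt)
      have hdvd : DvdMod w'.toFun φ (-a) := by
        refine ⟨q, ?_, ?_⟩
        · have : -a - φ * q = -f := by rw [← hfe]; ring
          rw [this, ValOn.vmap_neg, ValOn.vmap_neg]
          exact hb
        · rw [ValOn.vmap_neg, hc]
      have hlt' := dvd_imp_lt hle hφ (-a) (neg_ne_zero.mpr ha0) hdvd
      rw [ValOn.vmap_neg, ValOn.vmap_neg] at hlt'
      exact absurd (low_deg_eq hle hφ a (hadef ▸ degree_modByMonic_lt f hφm)) (ne_of_lt hlt')
    exact ⟨hmain, hc ▸ hmain⟩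
  · have h1 : w'.toFun f = w'.toFun (φ * q) := by
      rw [← hfe, add_comm]
      exact ValOn.vmap_add_eq_left w' hc
    exact ⟨h1 ▸ hc.le, le_of_eq h1⟩

/-- (E): each term of the `φ`-expansion has `w'`-value at least `w' f`. -/
lemma term_ge (hle : FnLe w'.toFun w.toFun) (hφ : InPhi w'.toFun w.toFun φ) :
    ∀ (i : ℕ) (f : Polynomial K),
      w'.toFun f ≤ w'.toFun ((f /ₘ φ ^ i) %ₘ φ * φ ^ i) := by
  intro i
  induction i with
  | zero =>
    intro f
    simpa [divByMonic_one] using (trunc_le_s16 hle hφ f).1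
  | succ i ih =>
    intro f
    have h1 := (trunc_le_s16 hle hφ f).2
    have h2 : w'.toFun (φ * (f /ₘ φ))
        ≤ w'.toFun ((f /ₘ φ ^ (i + 1)) %ₘ φ * φ ^ (i + 1)) := by
      rw [div_pow_succ_s16 hφ.1, w'.map_mul']
      have h3 : (f /ₘ φ /ₘ φ ^ i) %ₘ φ * φ ^ (i + 1)
          = φ * ((f /ₘ φ /ₘ φ ^ i) %ₘ φ * φ ^ i) := by
        rw [pow_succ']; ring
      rw [h3, w'.map_mul']
      exact add_le_add_right (ih (f /ₘ φ)) _
    exact le_trans h1 h2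

end Main


/-- Vaquié, Theorem 1.15: for valuations `w' < w` on `K(X)`, any
`φ ∈ Φ(w', w)` is a key polynomial for `w'` and `w' < [w'; φ, w(φ)] ≤ w`; moreover,
for nonzero `f`, `w'(f) = w(f)` iff `φ ∤_{w'} f`. -/
theorem inPhi_keyPol_and_augmentation_between
    {K : Type*} [Field K] {Γ : Type*} [AddCommGroup Γ] [LinearOrder Γ] [IsOrderedAddMonoid Γ]
    (w' w : ValOn (Polynomial K) Γ) (hlt : FnLt w'.toFun w.toFun)
    (φ : Polynomial K) (hφ : InPhi w'.toFun w.toFun φ) :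
    IsKeyPol w'.toFun φ ∧
    (∃ γ : Γ, (γ : WithTop Γ) = w.toFun φ ∧
      FnLt w'.toFun (augVal w'.toFun φ γ) ∧ FnLe (augVal w'.toFun φ γ) w.toFun) ∧
    ∀ f : Polynomial K, f ≠ 0 → (w'.toFun f = w.toFun f ↔ ¬ DvdMod w'.toFun φ f) := by
  obtain ⟨hle, -⟩ := hlt
  have hφm := hφ.1
  have hdeg := phi_deg_pos hφ
  -- φ is a key polynomial
  have hkey : IsKeyPol w'.toFun φ := by
    refine ⟨hφm, ?_, ?_⟩
    · intro h q hd
      have hhq0 : h * q ≠ 0 := by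
        intro hz
        obtain ⟨s, h1, -⟩ := hd
        rw [hz, w'.map_zero'] at h1
        exact not_top_lt h1
      obtain ⟨hh0, hq0⟩ := mul_ne_zero_iff.mp hhq0
      have hml := dvd_imp_lt hle hφ _ hhq0 hd
      by_cases hh : w'.toFun h < w.toFun h
      · exact Or.inl (lt_imp_dvd hle hφ h hh0 hh)
      · have heqh : w'.toFun h = w.toFun h := le_antisymm (hle h) (not_lt.mp hh)
        have hq : w'.toFun q < w.toFun q := by
          rw [w'.map_mul', w.map_mul', heqh] at hml
          exact (WithTop.add_lt_add_iff_left (w.ne_top' h hh0)).mp hml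
        exact Or.inr (lt_imp_dvd hle hφ q hq0 hq)
    · intro h hh0 hd
      by_contra hc
      push_neg at hc
      exact absurd (low_deg_eq hle hφ h hc) (ne_of_lt (dvd_imp_lt hle hφ h hh0 hd))
  obtain ⟨γ, hγ⟩ := WithTop.ne_top_iff_exists.mp (w.ne_top' φ hφm.ne_zero)
  have hγφ' : w'.toFun φ < (γ : WithTop Γ) := by rw [hγ]; exact hφ.2.1
  have hd1 : 1 ≤ φ.natDegree := natDegree_pos_iff_degree_pos.mpr hdeg
  -- augVal φ = γ
  have hφφ : φ /ₘ φ = 1 := by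
    refine (div_modByMonic_unique (f := φ) 1 0 hφm ⟨by simp, ?_⟩).1
    rw [degree_zero]
    exact bot_lt_iff_ne_bot.mpr fun h => hφm.ne_zero (degree_eq_bot.mp h)
  have hmod1 : (1 : Polynomial K) %ₘ φ = 1 :=
    (modByMonic_eq_self_iff hφm).mpr (by rw [degree_one]; exact hdeg)
  have hmodφ : φ %ₘ φ = 0 := (modByMonic_eq_zero_iff_dvd hφm).mpr dvd_rfl
  have hpow2 : ∀ i : ℕ, 2 ≤ i → φ /ₘ φ ^ i = 0 := by
    intro i hi
    refine (divByMonic_eq_zero_iff (hφm.pow i)).mpr ?_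
    rw [degree_eq_natDegree hφm.ne_zero, degree_eq_natDegree (hφm.pow i).ne_zero,
      hφm.natDegree_pow]
    exact_mod_cast (by nlinarith : φ.natDegree < i * φ.natDegree)
  have haugφ : augVal w'.toFun φ γ φ = (γ : WithTop Γ) := by
    unfold augVal
    refine le_antisymm ?_ (Finset.le_inf ?_)
    · refine le_trans (Finset.inf_le (Finset.mem_range.mpr (by omega : 1 < φ.natDegree + 1))) ?_
      rw [pow_one, hφφ, hmod1, ValOn.vmap_one, one_smul, zero_add]
    · intro i _
      match i with
      | 0 =>
        rw [pow_zero, divByMonic_one, hmodφ, w'.map_zero', top_add]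
        exact le_top
      | 1 =>
        rw [pow_one, hφφ, hmod1, ValOn.vmap_one, one_smul, zero_add]
      | (i + 2) =>
        rw [hpow2 (i + 2) (by omega), zero_modByMonic, w'.map_zero', top_add]
        exact le_top
  have hle1 : FnLe w'.toFun (augVal w'.toFun φ γ) := by
    intro f
    unfold augVal
    refine Finset.le_inf ?_
    intro i _
    calc w'.toFun f ≤ w'.toFun ((f /ₘ φ ^ i) %ₘ φ * φ ^ i) := term_ge hle hφ i f
      _ = w'.toFun ((f /ₘ φ ^ i) %ₘ φ) + i • w'.toFun φ := by
          rw [w'.map_mul', ValOn.vmap_pow]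
      _ ≤ w'.toFun ((f /ₘ φ ^ i) %ₘ φ) + i • ((γ : WithTop Γ)) :=
          add_le_add_right (nsmul_le_nsmul_right hγφ'.le i) _
  have hle2 : FnLe (augVal w'.toFun φ γ) w.toFun := by
    intro f
    by_cases hf0 : f = 0
    · rw [hf0, w.map_zero']
      exact le_top
    · have hsum := expansion_sum hφm hdeg f.natDegree f le_rfl
      have hinf : ((Finset.range (f.natDegree + 1)).inf
          fun i => w.toFun ((f /ₘ φ ^ i) %ₘ φ * φ ^ i)) ≤ w.toFun f := by
        conv_rhs => rw [← hsum]
        exact ValOn.inf_le_vmap_sum w _ _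
      refine le_trans ?_ hinf
      unfold augVal
      refine Finset.inf_mono_fun ?_
      intro i _
      have hdeg_i : ((f /ₘ φ ^ i) %ₘ φ).degree < φ.degree := degree_modByMonic_lt _ hφm
      rw [w.map_mul', ValOn.vmap_pow, ← low_deg_eq hle hφ _ hdeg_i, ← hγ]
  refine ⟨hkey, ⟨γ, hγ, ⟨hle1, φ, ?_⟩, hle2⟩, ?_⟩
  · rw [haugφ]
    exact hγφ'
  · intro f hf
    constructor
    · intro heq hd
      exact absurd heq (ne_of_lt (dvd_imp_lt hle hφ f hf hd))
    · intro hnd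
      exact le_antisymm (hle f) (not_lt.mp fun h => hnd (lt_imp_dvd hle hφ f hf h))

end MLV
end
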